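/- Let V be an infinite virtually cyclic group of type II. Then there exist a subgroup W of V of index 2 that is an infinite virtually cyclic group of type I, and an element x ∈ V with xWx⁻¹ = W such that conjugation by x induces the inversion automorphism on the infinite cyclic group W/K_W. -/

import Mathlib

/-- A group is virtually cyclic if it contains a cyclic subgroup of finite index. -/
def VirtuallyCyclic (G : Type*) [Group G] : Prop :=
  ∃ H : Subgroup G, IsCyclic ↥H ∧ H.FiniteIndex

/-- An infinite virtually cyclic group is of type I if it admits a surjective
homomorphism onto the infinite cyclic group ℤ. -/
def IsTypeI (G : Type*) [Group G] : Prop :=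
  ∃ f : G →* Multiplicative ℤ, Function.Surjective f

/-- An infinite virtually cyclic group is of type II if it admits a surjective
homomorphism onto the infinite dihedral group D∞. -/
def IsTypeII (G : Type*) [Group G] : Prop :=
  ∃ f : G →* DihedralGroup 0, Function.Surjective f


open DihedralGroup

def dsgn : DihedralGroup 0 →* Multiplicative (ZMod 2) where
  toFun x := Multiplicative.ofAdd (match x with | .r _ => 0 | .sr _ => 1)
  map_one' := rfl
  map_mul' := by rintro (i|i) (j|j) <;> simp only [r_mul_r, r_mul_sr, sr_mul_r, sr_mul_sr] <;> rfl

lemma dsgn_surjective : Function.Surjective dsgn := by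
  intro x
  have h : ∀ a : ZMod 2, a = 0 ∨ a = 1 := by decide
  rcases h x.toAdd with h | h
  · exact ⟨.r 0, by simp [dsgn]; exact h.symm⟩
  · exact ⟨.sr 0, by simp [dsgn]; exact h.symm⟩

def rotInd : DihedralGroup 0 → Multiplicative ℤ
  | .r i => Multiplicative.ofAdd i
  | .sr _ => 1

lemma exists_r_of_dsgn_eq_one (x : DihedralGroup 0) (h : dsgn x = 1) :
    ∃ i : ℤ, x = .r i := by
  cases x with
  | r i => exact ⟨i, rfl⟩
  | sr i =>
    exfalso
    have : ((1 : ZMod 2)) = 0 := h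
    simp at this

lemma toAdd_eq_zero' {a : Multiplicative ℤ} (h : a.toAdd = 0) : a = 1 := by
  rw [← ofAdd_toAdd a, h]; rfl

lemma le_ker_of_finite {G : Type*} [Group G] (φ : G →* Multiplicative ℤ)
    (L : Subgroup G) (hL : Finite L) : L ≤ φ.ker := by
  intro l hl
  have h1 : IsOfFinOrder (⟨l, hl⟩ : ↥L) := isOfFinOrder_of_finite _
  have h2 : IsOfFinOrder l := (Submonoid.isOfFinOrder_coe).mpr h1
  have h3 : IsOfFinOrder (φ l) := φ.isOfFinOrder h2
  obtain ⟨n, hn, hpow⟩ := (isOfFinOrder_iff_pow_eq_one).mp h3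
  have hmul : (n : ℤ) * (φ l).toAdd = 0 := by
    have := congrArg Multiplicative.toAdd hpow
    simpa [nsmul_eq_mul] using this
  have hn' : (n : ℤ) ≠ 0 := Int.natCast_ne_zero.mpr hn.ne'
  have h4 : (φ l).toAdd = 0 := (mul_eq_zero.mp hmul).resolve_left hn'
  exact toAdd_eq_zero' h4

lemma ker_finite {G : Type*} [Group G] [Infinite G]
    (H : Subgroup G) (hcyc : IsCyclic ↥H) (hfin : H.FiniteIndex)
    (φ : G →* Multiplicative ℤ) (hφ : Function.Surjective φ) : Finite φ.ker := by
  obtain ⟨g, hg⟩ := hcyc.exists_generator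
  have hgne : φ (g : G) ≠ 1 := by
    intro hone
    have hle : H ≤ φ.ker := by
      intro h hh
      obtain ⟨n, hn⟩ := hg ⟨h, hh⟩
      have heq : (h : G) = (g : G) ^ n := by
        have := congrArg (Subtype.val) hn
        simpa using this.symm
      simp [MonoidHom.mem_ker, heq, map_zpow, hone]
    have hfi : φ.ker.FiniteIndex := Subgroup.finiteIndex_of_le hle
    have hq : Finite (G ⧸ φ.ker) := φ.ker.finite_quotient_of_finiteIndex
    have e := QuotientGroup.quotientKerEquivOfSurjective φ hφ
    exact @not_finite (Multiplicative ℤ) _ (Finite.of_equiv (G ⧸ φ.ker) e.toEquiv)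
  have htriv : ∀ k ∈ φ.ker, k ∈ H → k = 1 := by
    intro k hk hkH
    obtain ⟨n, hn⟩ := hg ⟨k, hkH⟩
    have hkg : k = (g : G) ^ n := by
      have := congrArg (Subtype.val) hn
      simpa using this.symm
    have hp : (φ (g : G)) ^ n = 1 := by
      rw [← map_zpow, ← hkg]; exact hk
    have hn0 : n = 0 := by
      by_contra hne
      apply hgne
      have hmul : n * (φ (g:G)).toAdd = 0 := by
        have := congrArg Multiplicative.toAdd hp
        simpa [zsmul_eq_mul] using this
      exact toAdd_eq_zero' ((mul_eq_zero.mp hmul).resolve_left hne)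
    simp [hkg, hn0]
  have hq : Finite (G ⧸ H) := H.finite_quotient_of_finiteIndex
  have hinj : Function.Injective (fun k : ↥φ.ker => (QuotientGroup.mk (k : G) : G ⧸ H)) := by
    intro k₁ k₂ hk
    have hmem : (k₁ : G)⁻¹ * k₂ ∈ H := (QuotientGroup.eq).mp hk
    have hker : (k₁ : G)⁻¹ * k₂ ∈ φ.ker := mul_mem (inv_mem k₁.2) k₂.2
    have := htriv _ hker hmem
    ext
    exact inv_mul_eq_one.mp this
  exact Finite.of_injective _ hinj

lemma infinite_subgroup_of_finiteIndex {G : Type*} [Group G] [Infinite G]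
    (W : Subgroup G) (hW : W.FiniteIndex) : Infinite ↥W := by
  by_contra h
  rw [not_infinite_iff_finite] at h
  have hc : W.index * Nat.card ↥W = 0 := by
    rw [W.index_mul_card]; exact Nat.card_eq_zero_of_infinite
  rcases Nat.mul_eq_zero.mp hc with h0 | h0
  · exact hW.index_ne_zero h0
  · exact Nat.card_ne_zero.mpr ⟨One.instNonempty, h⟩ h0

lemma virtuallyCyclic_subgroup {G : Type*} [Group G] (hG : VirtuallyCyclic G)
    (W : Subgroup G) (hW : W.FiniteIndex) : VirtuallyCyclic ↥W := by
  obtain ⟨H, hcyc, hfin⟩ := hG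
  haveI := hcyc
  haveI := hfin
  haveI := hW
  haveI : (H ⊓ W).FiniteIndex := inferInstance
  refine ⟨(H ⊓ W).subgroupOf W, ?_, inferInstance⟩
  have e₁ : ↥((H ⊓ W).subgroupOf H) ≃* ↥(H ⊓ W) :=
    Subgroup.subgroupOfEquivOfLe inf_le_left
  have e₂ : ↥((H ⊓ W).subgroupOf W) ≃* ↥(H ⊓ W) :=
    Subgroup.subgroupOfEquivOfLe inf_le_right
  haveI : IsCyclic ↥((H ⊓ W).subgroupOf H) := Subgroup.isCyclic _
  haveI : IsCyclic ↥(H ⊓ W) := isCyclic_of_surjective e₁ e₁.surjective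
  exact isCyclic_of_surjective e₂.symm e₂.symm.surjective

/-- An infinite virtually cyclic group `V` of type II contains an index-2 subgroup `W` which
is infinite virtually cyclic of type I, and an element `x ∈ V` with `xWx⁻¹ = W` such that
conjugation by `x` induces the inversion automorphism on the infinite cyclic group `W/K_W`. -/
theorem typeII_contains_oriented_reversing_typeI_subgroup (V : Type*) [Group V] [Infinite V]
    (hV : VirtuallyCyclic V) (hII : IsTypeII V) :
    ∃ W : Subgroup V, W.index = 2 ∧ Infinite ↥W ∧ VirtuallyCyclic ↥W ∧ IsTypeI ↥W ∧
      ∃ KW : Subgroup ↥W, KW.Normal ∧ Finite KW ∧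
        (∀ L : Subgroup ↥W, L.Normal → Finite L → L ≤ KW) ∧
        ∃ x : V, ∃ hx : ∀ v : V, v ∈ W ↔ x * v * x⁻¹ ∈ W,
          ∀ w : ↥W, (QuotientGroup.mk (⟨x * ↑w * x⁻¹, (hx ↑w).mp w.2⟩ : ↥W) : ↥W ⧸ KW) =
            QuotientGroup.mk w⁻¹ := by
  obtain ⟨f, hf⟩ := hII
  set g := dsgn.comp f with hgdef
  have hgs : Function.Surjective g := dsgn_surjective.comp hf
  -- the index-2 subgroup
  set W := g.ker with hWdef
  have hidx : W.index = 2 := by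
    rw [hWdef, Subgroup.index_ker, MonoidHom.range_eq_top.mpr hgs]
    rw [Nat.card_congr Subgroup.topEquiv.toEquiv]
    simp [Nat.card_eq_fintype_card]
  have hWfi : W.FiniteIndex := ⟨by rw [hidx]; omega⟩
  haveI hWinf : Infinite ↥W := infinite_subgroup_of_finiteIndex W hWfi
  have hWvc : VirtuallyCyclic ↥W := virtuallyCyclic_subgroup hV W hWfi
  -- every element of W maps to a rotation
  have hWr : ∀ w : V, w ∈ W → ∃ i : ℤ, f w = .r i := by
    intro w hw
    exact exists_r_of_dsgn_eq_one (f w) hw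
  -- the homomorphism to ℤ
  set φ : ↥W →* Multiplicative ℤ :=
    { toFun := fun w => rotInd (f ↑w)
      map_one' := by show rotInd (f ((1 : ↥W) : V)) = 1; rw [OneMemClass.coe_one, map_one]; rfl
      map_mul' := by
        intro a b
        obtain ⟨i, hi⟩ := hWr ↑a a.2
        obtain ⟨j, hj⟩ := hWr ↑b b.2
        show rotInd (f (↑a * ↑b)) = rotInd (f ↑a) * rotInd (f ↑b)
        erw [map_mul, hi, hj, DihedralGroup.r_mul_r]
        rfl } with hφdef
  have hφval : ∀ (w : ↥W) (i : ℤ), f ↑w = .r i → φ w = Multiplicative.ofAdd i := by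
    intro w i hi
    show rotInd (f ↑w) = _
    rw [hi]
    rfl
  have hφs : Function.Surjective φ := by
    intro j
    obtain ⟨v, hv⟩ := hf (.r j.toAdd)
    have hvW : v ∈ W := by
      show dsgn (f v) = 1
      rw [hv]; rfl
    refine ⟨⟨v, hvW⟩, ?_⟩
    rw [hφval ⟨v, hvW⟩ j.toAdd hv, ofAdd_toAdd]
  -- the element x
  obtain ⟨x, hxf⟩ := hf (.sr 0)
  have hgx : ∀ v : V, g (x * v * x⁻¹) = g v := by
    intro v
    rw [map_mul, map_mul, map_inv, mul_comm (g x) (g v), mul_assoc, mul_inv_cancel, mul_one]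
  have hx : ∀ v : V, v ∈ W ↔ x * v * x⁻¹ ∈ W := by
    intro v
    constructor
    · intro hv
      show g _ = 1
      rw [hgx]; exact hv
    · intro hv
      have : g (x * v * x⁻¹) = 1 := hv
      rwa [hgx] at this
  -- conjugation by x inverts f-images of W
  have hconj : ∀ (w : ↥W) (i : ℤ), f ↑w = .r i → f (x * ↑w * x⁻¹) = .r (-i) := by
    intro w i hi
    have hsr : (DihedralGroup.sr (0 : ZMod 0))⁻¹ = DihedralGroup.sr 0 := rfl
    erw [map_mul, map_mul, map_inv, hxf, hi, hsr, DihedralGroup.sr_mul_r,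
      DihedralGroup.sr_mul_sr]
    congr 1
    show (0 : ℤ) - (0 + i) = -i
    ring
  -- assemble
  refine ⟨W, hidx, hWinf, hWvc, ⟨φ, hφs⟩, φ.ker, inferInstance, ?_, ?_, x, hx, ?_⟩
  · obtain ⟨H, hcyc, hfin⟩ := hWvc
    exact ker_finite H hcyc hfin φ hφs
  · intro L _ hL
    exact le_ker_of_finite φ L hL
  · intro w
    obtain ⟨i, hi⟩ := hWr ↑w w.2
    rw [QuotientGroup.eq]
    show _ ∈ φ.ker
    rw [MonoidHom.mem_ker, map_mul, map_inv, map_inv, inv_mul_eq_one]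
    rw [hφval w i hi]
    have hw' : f ((⟨x * ↑w * x⁻¹, (hx ↑w).mp w.2⟩ : ↥W) : V) = .r (-i) := hconj w i hi
    rw [hφval _ (-i) hw']
    rfl
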